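/- For α > −1, let dμ = x_n^α dx on the upper half space. Let 𝒟 be a Lipschitz and convex domain contained in B₁⁺ = B₁ ∩ {x_n > 0} ⊂ ℝⁿ. Then there exists a constant C > 0, depending only on n, α, and the Lipschitz constant of 𝒟, such that μ(B_{2r}(x₀) ∩ 𝒟) ≤ C μ(B_r(x₀) ∩ 𝒟) for all x₀ ∈ 𝒟 and 0 < r < diam 𝒟. -/

import Mathlib

open MeasureTheory Metric Set
open scoped ENNReal

set_option maxHeartbeats 1000000

lemma coord_abs_le_norm {m : ℕ} (v : EuclideanSpace ℝ (Fin m)) (i : Fin m) : |v i| ≤ ‖v‖ := by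
  have h := abs_real_inner_le_norm (EuclideanSpace.single i (1:ℝ)) v
  rw [EuclideanSpace.inner_single_left, EuclideanSpace.norm_single] at h
  simpa using h

lemma slab_lintegral (n : ℕ) (g : ℝ → ℝ≥0∞) (hg : Measurable g) (I : Fin (n+1) → Set ℝ) :
    ∫⁻ x in Set.univ.pi I, g (x (Fin.last n)) ∂(volume : Measure (Fin (n+1) → ℝ))
      = (∫⁻ t in I (Fin.last n), g t)
        * ∏ j : Fin n, volume (I ((Fin.last n).succAbove j)) := by
  set e := Fin.last n
  set φ := MeasurableEquiv.piFinSuccAbove (fun _ : Fin (n+1) => ℝ) e with hφ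
  have hφx : ∀ x : Fin (n+1) → ℝ, φ x = (x e, fun j => x (e.succAbove j)) := fun x => rfl
  have hmp : MeasurePreserving φ (volume : Measure (Fin (n+1) → ℝ))
      ((volume : Measure ℝ).prod (Measure.pi fun _ : Fin n => (volume : Measure ℝ))) := by
    exact
      measurePreserving_piFinSuccAbove (fun _ : Fin (n+1) => (volume : Measure ℝ)) e
  have hset : Set.univ.pi I
      = φ ⁻¹' ((I e) ×ˢ Set.univ.pi (fun j : Fin n => I (e.succAbove j))) := by
    ext x
    simp only [Set.mem_pi, Set.mem_univ, forall_true_left, Set.mem_preimage, Set.mem_prod, hφx]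
    constructor
    · intro h; exact ⟨h e, fun j => h _⟩
    · rintro ⟨h1, h2⟩ i
      by_cases hi : i = e
      · subst hi; exact h1
      · obtain ⟨j, rfl⟩ := Fin.exists_succAbove_eq hi
        exact h2 j
  rw [hset]
  have hrw : ∫⁻ x in φ ⁻¹' ((I e) ×ˢ Set.univ.pi (fun j : Fin n => I (e.succAbove j))), g (x e)
      = ∫⁻ x in φ ⁻¹' ((I e) ×ˢ Set.univ.pi (fun j : Fin n => I (e.succAbove j))),
          (fun p : ℝ × (Fin n → ℝ) => g p.1) (φ x) := rfl
  rw [hrw, MeasurePreserving.setLIntegral_comp_preimage_emb hmp φ.measurableEmbedding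
    (fun p : ℝ × (Fin n → ℝ) => g p.1) _]
  rw [← Measure.prod_restrict]
  have := MeasureTheory.lintegral_prod_mul (μ := (volume : Measure ℝ).restrict (I e))
    (ν := (Measure.pi fun _ : Fin n => (volume : Measure ℝ)).restrict
      (Set.univ.pi (fun j : Fin n => I (e.succAbove j))))
    (f := g) (g := fun _ => (1:ℝ≥0∞)) hg.aemeasurable aemeasurable_const
  simp only [mul_one] at this
  rw [this, lintegral_one, Measure.restrict_apply_univ, Measure.pi_pi]

lemma lintegral_Ioo_rpow_le {α a b : ℝ} (hα : -1 < α) (ha : 0 ≤ a) (hb : 0 < b) :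
    ∫⁻ t in Ioo a b, ENNReal.ofReal (t ^ α) ≤ ENNReal.ofReal (b^(α+1)/(α+1)) := by
  have h1 : ∫⁻ t in Ioo a b, ENNReal.ofReal (t ^ α)
      ≤ ∫⁻ t in Ioo 0 b, ENNReal.ofReal (t ^ α) :=
    lintegral_mono' (Measure.restrict_mono (Set.Ioo_subset_Ioo ha le_rfl) le_rfl) le_rfl
  refine h1.trans ?_
  have hint : IntegrableOn (fun t : ℝ => t ^ α) (Ioo 0 b) volume := by
    have := intervalIntegral.intervalIntegrable_rpow' (a := 0) (b := b) hα
    rwa [intervalIntegrable_iff_integrableOn_Ioo_of_le hb.le] at this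
  have hnn : 0 ≤ᵐ[volume.restrict (Ioo 0 b)] fun t : ℝ => t ^ α := by
    filter_upwards [ae_restrict_mem measurableSet_Ioo] with t ht
    exact Real.rpow_nonneg ht.1.le α
  rw [← MeasureTheory.ofReal_integral_eq_lintegral_ofReal hint hnn]
  apply ENNReal.ofReal_le_ofReal
  have : ∫ t in Set.Ioo 0 b, t ^ α = ∫ t in (0:ℝ)..b, t ^ α := by
    rw [intervalIntegral.integral_of_le hb.le, MeasureTheory.integral_Ioc_eq_integral_Ioo]
  rw [this, integral_rpow (Or.inl hα), Real.zero_rpow (by linarith)]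
  simp

/-- For `α > −1` let `dμ = x_n^α dx`. If `𝒟` is a Lipschitz (here: open,
bounded, nonempty) convex domain contained in the upper half ball `B₁⁺`, then there is
`C > 0` such that `μ(B_{2r}(x₀) ∩ 𝒟) ≤ C μ(B_r(x₀) ∩ 𝒟)` for all `x₀ ∈ 𝒟` and
`0 < r < diam 𝒟`. -/
theorem doubling_weighted_measure (n : ℕ) (α : ℝ) (hα : -1 < α)
    (𝒟 : Set (EuclideanSpace ℝ (Fin (n+1))))
    (h𝒟conv : Convex ℝ 𝒟) (h𝒟open : IsOpen 𝒟) (h𝒟ne : 𝒟.Nonempty)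
    (h𝒟sub : 𝒟 ⊆ ball 0 1 ∩ {x : EuclideanSpace ℝ (Fin (n+1)) | 0 < x (Fin.last n)}) :
    ∃ C > (0:ℝ), ∀ x₀ ∈ 𝒟, ∀ r : ℝ, 0 < r → r < Metric.diam 𝒟 →
      (volume.withDensity fun x : EuclideanSpace ℝ (Fin (n+1)) =>
          ENNReal.ofReal (x (Fin.last n) ^ α)) (ball x₀ (2*r) ∩ 𝒟)
        ≤ ENNReal.ofReal C *
          (volume.withDensity fun x : EuclideanSpace ℝ (Fin (n+1)) =>
            ENNReal.ofReal (x (Fin.last n) ^ α)) (ball x₀ r ∩ 𝒟) := by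
  classical
  set e : Fin (n+1) := Fin.last n with he
  set f : EuclideanSpace ℝ (Fin (n+1)) → ℝ≥0∞ := fun x => ENNReal.ofReal (x e ^ α) with hf
  have hfmeas : Measurable f := by
    apply Measurable.ennreal_ofReal
    exact ((measurable_pi_apply (X := fun _ : Fin (n+1) => ℝ) e).comp
      (MeasurableEquiv.toLp 2 (Fin (n+1) → ℝ)).symm.measurable).pow_const α
  set μw : Measure (EuclideanSpace ℝ (Fin (n+1))) := volume.withDensity f with hμw
  -- the inner ball
  obtain ⟨z, hz⟩ := h𝒟ne
  obtain ⟨ρ₀, hρ₀pos, hρ₀⟩ := Metric.isOpen_iff.1 h𝒟open z hz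
  set ρ : ℝ := ρ₀ / 2 with hρdef
  have hρ : 0 < ρ := by rw [hρdef]; linarith
  have hρρ₀ : ρ < ρ₀ := by rw [hρdef]; linarith
  have hball : closedBall z ρ ⊆ 𝒟 :=
    (Metric.closedBall_subset_ball hρρ₀).trans hρ₀
  clear_value ρ
  have hbdd : Bornology.IsBounded 𝒟 :=
    Metric.isBounded_ball.subset (fun x hx => (h𝒟sub hx).1)
  set D : ℝ := Metric.diam 𝒟 with hD
  clear_value D
  -- z's last coordinate is at least ρ
  have hsingle_mem : ∀ c : ℝ, |c| ≤ ρ → z + c • EuclideanSpace.single e (1:ℝ) ∈ 𝒟 := by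
    intro c hc
    apply hball
    rw [Metric.mem_closedBall, dist_eq_norm]
    have : z + c • EuclideanSpace.single e (1:ℝ) - z = c • EuclideanSpace.single e (1:ℝ) := by
      abel
    rw [this, norm_smul, EuclideanSpace.norm_single, norm_one, mul_one, Real.norm_eq_abs]
    exact hc
  have hze : ρ < z e := by
    have h1 : 0 < (z + (-ρ) • EuclideanSpace.single e (1:ℝ)) e :=
      (h𝒟sub (hsingle_mem (-ρ) (by rw [abs_neg, abs_of_pos hρ]))).2
    have h2 : (z + (-ρ) • EuclideanSpace.single e (1:ℝ)) e = z e - ρ := by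
      simp [PiLp.add_apply, PiLp.smul_apply, EuclideanSpace.single_apply]
      ring
    rw [h2] at h1
    linarith
  have hρD : 2 * ρ ≤ D := by
    have h1 := hsingle_mem ρ (by rw [abs_of_pos hρ])
    have h2 := hsingle_mem (-ρ) (by rw [abs_neg, abs_of_pos hρ])
    have h3 := Metric.dist_le_diam_of_mem hbdd h1 h2
    rw [dist_eq_norm] at h3
    have heq : z + ρ • EuclideanSpace.single e (1:ℝ) - (z + (-ρ) • EuclideanSpace.single e (1:ℝ))
        = (2*ρ) • EuclideanSpace.single e (1:ℝ) := by
      module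
    rw [heq, norm_smul, EuclideanSpace.norm_single, norm_one, mul_one, Real.norm_eq_abs,
      abs_of_pos (by linarith)] at h3
    rw [hD]
    exact h3
  have hDpos : 0 < D := lt_of_lt_of_le (by linarith) hρD
  have hρD' : ρ ≤ D := by linarith
  -- constants
  set M : ℝ := min ((1/2:ℝ)^α) ((3/2:ℝ)^α) with hM
  have hMpos : 0 < M := lt_min (Real.rpow_pos_of_pos (by norm_num) α)
    (Real.rpow_pos_of_pos (by norm_num) α)
  clear_value M
  set Q : ℝ := 8*D/ρ with hQ
  have hQpos : 0 < Q := by rw [hQ]; exact div_pos (by linarith) hρ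
  clear_value Q
  set V : ℝ≥0∞ := volume (ball (0:EuclideanSpace ℝ (Fin (n+1))) 1) with hV
  have hVpos : 0 < V := by rw [hV]; exact measure_ball_pos volume 0 one_pos
  have hVlt : V < ⊤ := by rw [hV]; exact measure_ball_lt_top
  clear_value V
  set Vr : ℝ := V.toReal with hVr
  have hVrpos : 0 < Vr := by rw [hVr]; exact ENNReal.toReal_pos hVpos.ne' hVlt.ne
  clear_value Vr
  set K₁ : ℝ := 4/3 + 8*D/ρ with hK₁
  have hK₁pos : 0 < K₁ := by
    rw [hK₁]
    have := div_pos (show (0:ℝ) < 8*D by linarith) hρ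
    linarith
  clear_value K₁
  set K₂ : ℝ := 6/(α+1) + 4*(5/2:ℝ)^(-α) with hK₂
  have hK₂pos : 0 < K₂ := by
    have h1 : (0:ℝ) < 6/(α+1) := by
      apply div_pos (by norm_num); linarith
    have h2 : (0:ℝ) < (5/2:ℝ)^(-α) := Real.rpow_pos_of_pos (by norm_num) _
    rw [hK₂]
    linarith
  clear_value K₂
  set C₁ : ℝ := K₁^α * (2*Q)^(n+1) / M with hC₁
  have hC₁pos : 0 < C₁ := by
    rw [hC₁]
    apply div_pos _ hMpos
    exact mul_pos (Real.rpow_pos_of_pos hK₁pos α) (pow_pos (by linarith) _)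
  clear_value C₁
  set C₂ : ℝ := 4^n * K₂ * Q^(n+1) / (M * Vr) with hC₂
  have hC₂pos : 0 < C₂ := by
    rw [hC₂]
    apply div_pos _ (mul_pos hMpos hVrpos)
    exact mul_pos (mul_pos (pow_pos (by norm_num) n) hK₂pos) (pow_pos hQpos _)
  clear_value C₂
  refine ⟨C₁ + C₂, by linarith, ?_⟩
  intro x₀ hx₀ r hr hrD
  set C : ℝ := C₁ + C₂ with hC
  have hCpos : 0 < C := by rw [hC]; linarith
  clear_value C
  set d : ℝ := x₀ e with hd
  have hdpos : 0 < d := by rw [hd]; exact (h𝒟sub hx₀).2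
  clear_value d
  have hrD' : r < D := hrD
  set t : ℝ := r / (4*D) with ht
  have htpos : 0 < t := by rw [ht]; exact div_pos hr (by linarith)
  have ht4 : t ≤ 1/4 := by
    rw [ht, div_le_div_iff₀ (by linarith) (by norm_num)]
    linarith
  have htD : t * D = r / 4 := by
    rw [ht]; field_simp [hDpos.ne']; try ring
  clear_value t
  set y : EuclideanSpace ℝ (Fin (n+1)) := x₀ + t • (z - x₀) with hy
  set s : ℝ := t * ρ with hs
  have hspos : 0 < s := by rw [hs]; exact mul_pos htpos hρ
  have hye : y e = x₀ e + t * (z e - x₀ e) := by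
    simp [hy, PiLp.add_apply, PiLp.smul_apply, PiLp.sub_apply]
  have hzx₀ : dist z x₀ ≤ D := by rw [hD]; exact Metric.dist_le_diam_of_mem hbdd hz hx₀
  have hze_d : |z e - x₀ e| ≤ D := by
    have h1 : (z - x₀) e = z e - x₀ e := by simp [PiLp.sub_apply]
    have h2 := coord_abs_le_norm (z - x₀) e
    rw [h1] at h2
    rw [dist_eq_norm] at hzx₀
    linarith
  have hys : s ≤ y e := by
    rw [hye, ← hd]
    have h1 : t * ρ ≤ t * z e := by
      apply mul_le_mul_of_nonneg_left (le_of_lt hze) htpos.le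
    have h2 : 0 ≤ (1 - t) * d := mul_nonneg (by linarith) hdpos.le
    rw [hs]
    nlinarith [h1, h2]
  have hy0 : 0 < y e := lt_of_lt_of_le hspos hys
  have hy34 : 3/4 * d ≤ y e := by
    rw [hye, ← hd]
    have h1 : 0 ≤ t * z e := mul_nonneg htpos.le (by linarith)
    have h2 : t * d ≤ 1/4 * d := mul_le_mul_of_nonneg_right ht4 hdpos.le
    nlinarith [h1, h2]
  have hydr : y e ≤ d + r/4 := by
    rw [hye, ← hd]
    have h1 : t * (z e - x₀ e) ≤ t * D :=
      mul_le_mul_of_nonneg_left (le_trans (le_abs_self _) hze_d) htpos.le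
    rw [hd]
    linarith [htD]
  -- geometric inclusions
  have hball1 : ball y s ⊆ 𝒟 := by
    intro w hw
    have hu : z + t⁻¹ • (w - y) ∈ 𝒟 := by
      apply hρ₀
      rw [Metric.mem_ball, dist_eq_norm]
      have h0 : z + t⁻¹ • (w - y) - z = t⁻¹ • (w - y) := by abel
      rw [h0, norm_smul, Real.norm_eq_abs, abs_of_pos (inv_pos.mpr htpos)]
      rw [Metric.mem_ball, dist_eq_norm] at hw
      calc t⁻¹ * ‖w - y‖ < t⁻¹ * s := by
            apply mul_lt_mul_of_pos_left hw (inv_pos.mpr htpos)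
        _ = ρ := by rw [hs]; field_simp
        _ < ρ₀ := hρρ₀
    have hcomb := h𝒟conv hx₀ hu (a := 1 - t) (b := t) (by linarith) htpos.le (by ring)
    have heq : (1 - t) • x₀ + t • (z + t⁻¹ • (w - y)) = w := by
      have htne : t ≠ 0 := htpos.ne'
      rw [hy]
      match_scalars <;> (field_simp; try ring)
    rwa [heq] at hcomb
  have hball2 : ball y (s/2) ⊆ ball x₀ r := by
    intro w hw
    rw [Metric.mem_ball] at hw ⊢
    have hdyx : dist y x₀ ≤ r/4 := by
      rw [hy, dist_eq_norm]
      have h0 : x₀ + t • (z - x₀) - x₀ = t • (z - x₀) := by abel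
      rw [h0, norm_smul, Real.norm_eq_abs, abs_of_pos htpos]
      calc t * ‖z - x₀‖ ≤ t * D := by
            apply mul_le_mul_of_nonneg_left _ htpos.le
            rw [← dist_eq_norm]; exact hzx₀
        _ = r/4 := htD
    have hs2 : s/2 ≤ r/4 := by
      have h0 : s ≤ t * D := by
        rw [hs]; exact mul_le_mul_of_nonneg_left hρD' htpos.le
      rw [htD] at h0
      linarith
    calc dist w x₀ ≤ dist w y + dist y x₀ := dist_triangle w y x₀
      _ < s/2 + r/4 := by linarith
      _ ≤ r := by linarith
  clear_value y s
  -- lower bound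
  have hfin : Module.finrank ℝ (EuclideanSpace ℝ (Fin (n+1))) = n + 1 := finrank_euclideanSpace_fin
  set Lo : ℝ := M * (y e)^α * (s/2)^(n+1) with hLo
  have hLopos : 0 < Lo := by
    rw [hLo]
    exact mul_pos (mul_pos hMpos (Real.rpow_pos_of_pos hy0 α)) (pow_pos (by linarith) _)
  clear_value Lo
  have hlower : ENNReal.ofReal Lo * V ≤ μw (ball x₀ r ∩ 𝒟) := by
    have hsub : ball y (s/2) ⊆ ball x₀ r ∩ 𝒟 :=
      subset_inter hball2 ((ball_subset_ball (by linarith)).trans hball1)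
    refine le_trans ?_ (measure_mono hsub)
    rw [hμw, withDensity_apply f measurableSet_ball]
    have hpt : ∀ w ∈ ball y (s/2), ENNReal.ofReal (M * (y e)^α) ≤ f w := by
      intro w hw
      have hwe : |w e - y e| ≤ s/2 := by
        have h1 : (w - y) e = w e - y e := by simp [PiLp.sub_apply]
        have h2 := coord_abs_le_norm (w - y) e
        rw [h1] at h2
        rw [Metric.mem_ball, dist_eq_norm] at hw
        linarith
      have hwlo : y e / 2 ≤ w e := by
        have := abs_le.1 hwe
        linarith [hys]
      have hwhi : w e ≤ 3/2 * y e := by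
        have := abs_le.1 hwe
        linarith [hys]
      have hwpos : 0 < w e := lt_of_lt_of_le (by linarith) hwlo
      apply ENNReal.ofReal_le_ofReal
      rcases le_or_gt 0 α with hα0 | hα0
      · have h1 : M * (y e)^α ≤ (1/2:ℝ)^α * (y e)^α := by
          rw [hM]
          exact mul_le_mul_of_nonneg_right (min_le_left _ _) (Real.rpow_nonneg hy0.le α)
        have h2 : (1/2:ℝ)^α * (y e)^α = (y e / 2)^α := by
          rw [← Real.mul_rpow (by norm_num) hy0.le]; ring_nf
        have h3 : (y e / 2)^α ≤ (w e)^α :=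
          Real.rpow_le_rpow (by linarith) hwlo hα0
        linarith
      · have h1 : M * (y e)^α ≤ (3/2:ℝ)^α * (y e)^α := by
          rw [hM]
          exact mul_le_mul_of_nonneg_right (min_le_right _ _) (Real.rpow_nonneg hy0.le α)
        have h2 : (3/2:ℝ)^α * (y e)^α = (3/2 * y e)^α := by
          rw [← Real.mul_rpow (by norm_num) hy0.le]
        have h3 : (3/2 * y e)^α ≤ (w e)^α :=
          Real.rpow_le_rpow_of_nonpos hwpos hwhi hα0.le
        linarith
    calc ENNReal.ofReal Lo * V
        = ENNReal.ofReal (M * (y e)^α) * volume (ball y (s/2)) := by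
          rw [Measure.addHaar_ball volume y (by linarith : (0:ℝ) ≤ s/2), hfin, hLo,
            ENNReal.ofReal_mul (mul_nonneg hMpos.le (Real.rpow_nonneg hy0.le α))]
          rw [← hV]; ring
      _ ≤ ∫⁻ w in ball y (s/2), f w := by
          rw [← setLIntegral_const]
          exact setLIntegral_mono hfmeas hpt
  -- conclude by cases on the sign of α
  rcases le_or_gt 0 α with hα0 | hα0
  · -- upper bound, α ≥ 0
    have hupper : μw (ball x₀ (2*r) ∩ 𝒟)
        ≤ ENNReal.ofReal ((d + 2*r)^α * (2*r)^(n+1)) * V := by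
      have hpt : ∀ x ∈ ball x₀ (2*r) ∩ 𝒟, f x ≤ ENNReal.ofReal ((d + 2*r)^α) := by
        intro x ⟨hx1, hx2⟩
        have hxe : x e ≤ d + 2*r := by
          have h1 : (x - x₀) e = x e - x₀ e := by simp [PiLp.sub_apply]
          have h2 := coord_abs_le_norm (x - x₀) e
          rw [h1] at h2
          rw [Metric.mem_ball, dist_eq_norm] at hx1
          have h3 := abs_le.1 (h2.trans hx1.le)
          rw [hd]
          linarith [h3.2]
        apply ENNReal.ofReal_le_ofReal
        exact Real.rpow_le_rpow (le_of_lt (h𝒟sub hx2).2) hxe hα0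
      calc μw (ball x₀ (2*r) ∩ 𝒟)
          = ∫⁻ x in ball x₀ (2*r) ∩ 𝒟, f x := by
            rw [hμw, withDensity_apply f (measurableSet_ball.inter h𝒟open.measurableSet)]
        _ ≤ ∫⁻ _ in ball x₀ (2*r) ∩ 𝒟, ENNReal.ofReal ((d + 2*r)^α) :=
            setLIntegral_mono measurable_const hpt
        _ = ENNReal.ofReal ((d + 2*r)^α) * volume (ball x₀ (2*r) ∩ 𝒟) := setLIntegral_const _ _
        _ ≤ ENNReal.ofReal ((d + 2*r)^α) * volume (ball x₀ (2*r)) := by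
            exact mul_le_mul_right (measure_mono inter_subset_left) _
        _ = ENNReal.ofReal ((d + 2*r)^α * (2*r)^(n+1)) * V := by
          rw [Measure.addHaar_ball volume x₀ (by positivity : (0:ℝ) ≤ 2*r), hfin,
            ENNReal.ofReal_mul (Real.rpow_nonneg (by linarith) α), ← hV, mul_assoc]
    refine hupper.trans ?_
    have hreal : (d + 2*r)^α * (2*r)^(n+1) ≤ C * Lo := by
      have h2r : 2*r = (2*Q)*(s/2) := by
        rw [hQ, hs, ht]; field_simp [hρ.ne', hDpos.ne']; try ring
      have hCL : C₁ * Lo = (K₁ * y e)^α * (2*r)^(n+1) := by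
        have h0 : C₁ * Lo = K₁^α * (y e)^α * ((2*Q)^(n+1) * (s/2)^(n+1)) * (M / M) := by
          rw [hC₁, hLo]; ring
        rw [div_self hMpos.ne', mul_one] at h0
        rw [h0, ← mul_pow, ← h2r, Real.mul_rpow hK₁pos.le hy0.le]
      have hdK : d + 2*r ≤ K₁ * y e := by
        have h1 : d ≤ 4/3 * y e := by linarith
        have h2 : r ≤ 4*D/ρ * y e := by
          have h2' : r * ρ / (4*D) ≤ y e := by
            rw [hs, ht] at hys
            calc r * ρ / (4*D) = r / (4*D) * ρ := by ring
              _ ≤ y e := hys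
          rw [div_mul_eq_mul_div, le_div_iff₀ hρ]
          have h2'' := (div_le_iff₀ (show (0:ℝ) < 4*D by linarith)).mp h2'
          linarith only [h2'']
        have h9 : K₁ * y e = 4/3 * y e + 2 * (4*D/ρ * y e) := by rw [hK₁]; ring
        rw [h9]
        linarith only [h1, h2]
      have h3 : (d + 2*r)^α ≤ (K₁ * y e)^α :=
        Real.rpow_le_rpow (by linarith) hdK hα0
      have h4 : (d + 2*r)^α * (2*r)^(n+1) ≤ C₁ * Lo := by
        rw [hCL]
        apply mul_le_mul_of_nonneg_right h3 (by positivity)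
      have h5 : C₁ * Lo ≤ C * Lo := by
        apply mul_le_mul_of_nonneg_right _ hLopos.le
        rw [hC]; linarith only [hC₂pos]
      exact h4.trans h5
    calc ENNReal.ofReal ((d + 2*r)^α * (2*r)^(n+1)) * V
        ≤ ENNReal.ofReal (C * Lo) * V := by
          exact mul_le_mul_left (ENNReal.ofReal_le_ofReal hreal) V
      _ = ENNReal.ofReal C * (ENNReal.ofReal Lo * V) := by
          rw [ENNReal.ofReal_mul hCpos.le, mul_assoc]
      _ ≤ ENNReal.ofReal C * μw (ball x₀ r ∩ 𝒟) := mul_le_mul_right hlower _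
  · -- upper bound, α < 0
    set A : ℝ := max 0 (d - 2*r) with hA
    set B : ℝ := d + 2*r with hB
    have hA0 : 0 ≤ A := by rw [hA]; exact le_max_left _ _
    have hBpos : 0 < B := by rw [hB]; linarith
    have hAB : A ≤ B := by
      rw [hA, hB, max_le_iff]
      constructor <;> linarith
    clear_value A B
    set I : Fin (n+1) → Set ℝ := fun i =>
      if i = e then Ioo A B else Ioo (x₀ i - 2*r) (x₀ i + 2*r) with hI
    set S : Set (EuclideanSpace ℝ (Fin (n+1))) := {x : EuclideanSpace ℝ (Fin (n+1)) | ∀ i, x i ∈ I i} with hS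
    have hIe : I e = Ioo A B := by rw [hI]; simp
    have hIne : ∀ i : Fin (n+1), i ≠ e → I i = Ioo (x₀ i - 2*r) (x₀ i + 2*r) := by
      intro i hi
      rw [hI]; simp [hi]
    have hsubS : ball x₀ (2*r) ∩ 𝒟 ⊆ S := by
      rintro x ⟨hx1, hx2⟩ i
      have h1 : (x - x₀) i = x i - x₀ i := by simp [PiLp.sub_apply]
      have h2 := coord_abs_le_norm (x - x₀) i
      rw [h1] at h2
      rw [Metric.mem_ball, dist_eq_norm] at hx1
      have h3 := abs_lt.1 (lt_of_le_of_lt h2 hx1)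
      by_cases hi : i = e
      · subst hi
        rw [hIe]
        constructor
        · rw [hA, max_lt_iff]
          refine ⟨(h𝒟sub hx2).2, ?_⟩
          rw [hd]
          linarith [h3.2]
        · rw [hB, hd]
          linarith [h3.2]
      · rw [hIne i hi]
        exact ⟨by linarith [h3.1], by linarith [h3.2]⟩
    -- transfer to the pi space
    set ψ := (MeasurableEquiv.toLp 2 (Fin (n+1) → ℝ)).symm with hψ
    have hSpre : S = ψ ⁻¹' (Set.univ.pi I) := by
      ext x
      simp only [hS, Set.mem_setOf_eq, Set.mem_preimage, Set.mem_pi, Set.mem_univ,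
        forall_true_left]
      rfl
    have hg : Measurable (fun u : ℝ => ENNReal.ofReal (u ^ α)) :=
      Measurable.ennreal_ofReal (measurable_id.pow_const α)
    have hSmeas : MeasurableSet S := by
      rw [hSpre]
      apply MeasurableSet.preimage _ ψ.measurable
      apply MeasurableSet.univ_pi
      intro i
      by_cases hi : i = e
      · rw [hi, hIe]; exact measurableSet_Ioo
      · rw [hIne i hi]; exact measurableSet_Ioo
    have htransfer : ∫⁻ x in S, f x
        = (∫⁻ u in Ioo A B, ENNReal.ofReal (u ^ α))
          * ∏ j : Fin n, volume (I (e.succAbove j)) := by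
      have hmp := EuclideanSpace.volume_preserving_symm_measurableEquiv_toLp (Fin (n+1))
      have step1 : ∫⁻ x in S, f x
          = ∫⁻ x in ψ ⁻¹' (Set.univ.pi I),
              (fun u : Fin (n+1) → ℝ => ENNReal.ofReal (u e ^ α)) (ψ x) := by
        rw [hSpre]; rfl
      rw [step1, MeasurePreserving.setLIntegral_comp_preimage_emb hmp ψ.measurableEmbedding
        (fun u : Fin (n+1) → ℝ => ENNReal.ofReal (u e ^ α)) _]
      have hsl := slab_lintegral n (fun u => ENNReal.ofReal (u ^ α)) hg I
      rw [← he] at hsl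
      rw [hsl, hIe]
    have hprod : ∏ j : Fin n, volume (I (e.succAbove j)) = (ENNReal.ofReal (4*r))^n := by
      have h0 : ∀ j : Fin n, volume (I (e.succAbove j)) = ENNReal.ofReal (4*r) := by
        intro j
        have hne : e.succAbove j ≠ e := Fin.succAbove_ne e j
        rw [hIne _ hne, Real.volume_Ioo]
        congr 1; ring
      rw [Finset.prod_congr rfl (fun j _ => h0 j), Finset.prod_const]
      simp
    -- bound on the 1d integral
    have h1d : ∫⁻ u in Ioo A B, ENNReal.ofReal (u ^ α)
        ≤ ENNReal.ofReal (K₂ * r * (d + r)^α) := by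
      have hdr : 0 < d + r := by linarith
      have hdrα : (0:ℝ) ≤ (d+r)^α := Real.rpow_nonneg hdr.le α
      rcases lt_or_ge d (4*r) with hcase | hcase
      · -- d < 4r
        have hB6 : B ≤ 6*r := by rw [hB]; linarith
        refine (lintegral_Ioo_rpow_le hα hA0 hBpos).trans ?_
        apply ENNReal.ofReal_le_ofReal
        have h1 : B^(α+1) ≤ (6*r)^(α+1) :=
          Real.rpow_le_rpow hBpos.le hB6 (by linarith)
        have h2 : (6*r)^(α+1) = (6*r)^α * (6*r) := by
          rw [Real.rpow_add (by positivity), Real.rpow_one]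
        have h3 : (6*r)^α ≤ (d+r)^α := by
          apply Real.rpow_le_rpow_of_nonpos hdr (by linarith) hα0.le
        have h4 : B^(α+1)/(α+1) ≤ (6*r)^α * (6*r) / (α+1) := by
          apply div_le_div_of_nonneg_right _ (by linarith)
          rw [← h2]; exact h1
        have h5 : (6*r)^α * (6*r) / (α+1) ≤ (d+r)^α * (6*r) / (α+1) := by
          apply div_le_div_of_nonneg_right _ (by linarith)
          apply mul_le_mul_of_nonneg_right h3 (by positivity)
        have h6 : (d+r)^α * (6*r) / (α+1) ≤ K₂ * r * (d+r)^α := by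
          have hterm : (0:ℝ) ≤ (5/2:ℝ)^(-α) * r * (d+r)^α :=
            mul_nonneg (mul_nonneg (Real.rpow_pos_of_pos (by norm_num) _).le hr.le) hdrα
          have heq2 : (d+r)^α * (6*r) / (α+1) = 6/(α+1) * r * (d+r)^α := by
            field_simp
          have heq3 : K₂ * r * (d+r)^α
              = 6/(α+1) * r * (d+r)^α + 4*((5/2:ℝ)^(-α) * r * (d+r)^α) := by
            rw [hK₂]; ring
          rw [heq2, heq3]
          linarith only [hterm]
        exact (h4.trans h5).trans h6
      · -- d ≥ 4r
        have hA' : A = d - 2*r := by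
          rw [hA, max_eq_right]; linarith
        have hApos : 0 < A := by rw [hA']; linarith
        have hpt : ∀ u ∈ Ioo A B, ENNReal.ofReal (u ^ α) ≤ ENNReal.ofReal (A^α) := by
          intro u hu
          apply ENNReal.ofReal_le_ofReal
          exact Real.rpow_le_rpow_of_nonpos hApos hu.1.le hα0.le
        calc ∫⁻ u in Ioo A B, ENNReal.ofReal (u ^ α)
            ≤ ∫⁻ _ in Ioo A B, ENNReal.ofReal (A^α) := setLIntegral_mono measurable_const hpt
          _ = ENNReal.ofReal (A^α) * volume (Ioo A B) := setLIntegral_const _ _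
          _ = ENNReal.ofReal (A^α) * ENNReal.ofReal (B - A) := by rw [Real.volume_Ioo]
          _ ≤ ENNReal.ofReal (K₂ * r * (d + r)^α) := by
              rw [← ENNReal.ofReal_mul (Real.rpow_nonneg hApos.le α)]
              apply ENNReal.ofReal_le_ofReal
              have hBA : B - A = 4*r := by rw [hB, hA']; ring
              have h1 : A^α ≤ (2/5 * (d+r))^α := by
                apply Real.rpow_le_rpow_of_nonpos (by linarith) _ hα0.le
                rw [hA']; linarith
              have h2 : (2/5 * (d+r))^α = (2/5:ℝ)^α * (d+r)^α :=
                Real.mul_rpow (by norm_num) (by linarith)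
              have h25 : (2/5:ℝ)^α = (5/2:ℝ)^(-α) := by
                rw [Real.rpow_neg (by norm_num : (0:ℝ) ≤ 5/2),
                  ← Real.inv_rpow (by norm_num : (0:ℝ) ≤ 5/2)]
                norm_num
              have h3 : A^α * (B - A) ≤ (5/2:ℝ)^(-α) * (d+r)^α * (4*r) := by
                rw [hBA]
                apply mul_le_mul_of_nonneg_right _ (by positivity)
                rw [← h25, ← h2]; exact h1
              have h4 : (5/2:ℝ)^(-α) * (d+r)^α * (4*r) ≤ K₂ * r * (d+r)^α := by
                have h6 : (0:ℝ) < 6/(α+1) := div_pos (by norm_num) (by linarith)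
                have hterm : (0:ℝ) ≤ 6/(α+1) * r * (d+r)^α :=
                  mul_nonneg (mul_nonneg h6.le hr.le) hdrα
                have heq3 : K₂ * r * (d+r)^α
                    = 6/(α+1) * r * (d+r)^α + 4*((5/2:ℝ)^(-α) * r * (d+r)^α) := by
                  rw [hK₂]; ring
                rw [heq3]
                linarith only [hterm]
              exact h3.trans h4
    -- combine
    have hupper : μw (ball x₀ (2*r) ∩ 𝒟)
        ≤ ENNReal.ofReal (K₂ * r * (d + r)^α * (4*r)^n) := by
      have hdr : 0 < d + r := by linarith
      calc μw (ball x₀ (2*r) ∩ 𝒟) ≤ μw S := measure_mono hsubS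
        _ = ∫⁻ x in S, f x := by rw [hμw, withDensity_apply f hSmeas]
        _ = (∫⁻ u in Ioo A B, ENNReal.ofReal (u ^ α))
              * ∏ j : Fin n, volume (I (e.succAbove j)) := htransfer
        _ ≤ ENNReal.ofReal (K₂ * r * (d + r)^α) * (ENNReal.ofReal (4*r))^n := by
            rw [hprod]
            exact mul_le_mul_left h1d _
        _ = ENNReal.ofReal (K₂ * r * (d + r)^α * (4*r)^n) := by
            rw [← ENNReal.ofReal_pow (by positivity), ← ENNReal.ofReal_mul
              (mul_nonneg (mul_nonneg hK₂pos.le hr.le) (Real.rpow_nonneg hdr.le α))]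
    refine hupper.trans ?_
    have hreal : K₂ * r * (d + r)^α * (4*r)^n ≤ C * Lo * Vr := by
      have hs2Q : s/2 = r/Q := by
        rw [hs, ht, hQ]
        field_simp [hρ.ne', hDpos.ne']
        try ring
      have hCL : C₂ * Lo * Vr = K₂ * (y e)^α * (4*r)^n * r := by
        have h0 : C₂ * Lo * Vr
            = 4^n * K₂ * (y e)^α * (Q^(n+1) * (s/2)^(n+1)) * (M/M) * (Vr/Vr) := by
          rw [hC₂, hLo]; ring
        rw [div_self hMpos.ne', div_self hVrpos.ne', mul_one, mul_one] at h0
        have h1 : Q^(n+1) * (s/2)^(n+1) = r^(n+1) := by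
          rw [hs2Q, div_pow]
          field_simp
        rw [h0, h1]
        ring
      have hyle : y e ≤ d + r := by linarith
      have h3 : (d + r)^α ≤ (y e)^α :=
        Real.rpow_le_rpow_of_nonpos hy0 hyle hα0.le
      have h4 : K₂ * r * (d + r)^α * (4*r)^n ≤ C₂ * Lo * Vr := by
        rw [hCL]
        calc K₂ * r * (d + r)^α * (4*r)^n ≤ K₂ * r * (y e)^α * (4*r)^n := by
              apply mul_le_mul_of_nonneg_right _ (by positivity)
              apply mul_le_mul_of_nonneg_left h3 (mul_nonneg hK₂pos.le hr.le)
          _ = K₂ * (y e)^α * (4*r)^n * r := by ring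
      have h5 : C₂ * Lo * Vr ≤ C * Lo * Vr := by
        apply mul_le_mul_of_nonneg_right _ hVrpos.le
        apply mul_le_mul_of_nonneg_right _ hLopos.le
        rw [hC]; linarith only [hC₁pos]
      exact h4.trans h5
    calc ENNReal.ofReal (K₂ * r * (d + r)^α * (4*r)^n)
        ≤ ENNReal.ofReal (C * Lo * Vr) := ENNReal.ofReal_le_ofReal hreal
      _ = ENNReal.ofReal C * (ENNReal.ofReal Lo * ENNReal.ofReal Vr) := by
          rw [ENNReal.ofReal_mul (mul_nonneg hCpos.le hLopos.le),
            ENNReal.ofReal_mul hCpos.le, mul_assoc]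
      _ = ENNReal.ofReal C * (ENNReal.ofReal Lo * V) := by
          rw [hVr, ENNReal.ofReal_toReal hVlt.ne]
      _ ≤ ENNReal.ofReal C * μw (ball x₀ r ∩ 𝒟) := mul_le_mul_right hlower _
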